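/- For fixed r > 1 and fixed integer k ≥ 0, the limit as n → ∞ of ∑_{j=max(0,k−n−1)}^{∞} ((n+1)!·n^{j−k}/(n+1+j−k)!)·r^{−j} equals r/(r−1). -/

import Mathlib

open MeasureTheory Real Finset
open scoped BigOperators Nat

noncomputable section

/-- `x` is majorized by `y`: equal total sums, and each top-`k` partial sum of
`x` (expressed order-free: any sum of `x` over a `k`-element subset) is bounded
by the top-`k` partial sum of `y` (the max over `k`-element subsets). -/
def IsMajorized {d : ℕ} (x y : Fin d → ℝ) : Prop :=
  (∑ i, x i = ∑ i, y i) ∧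
    ∀ A : Finset (Fin d), ∃ B : Finset (Fin d),
      B.card = A.card ∧ ∑ i ∈ A, x i ≤ ∑ i ∈ B, y i

/-- A probability vector: nonnegative entries summing to `1`. -/
def IsProbVec {d : ℕ} (x : Fin d → ℝ) : Prop := (∀ i, 0 ≤ x i) ∧ ∑ i, x i = 1

/-- Tensor product of vectors: components `x i * z j`. -/
def tens {d l : ℕ} (x : Fin d → ℝ) (z : Fin l → ℝ) : Fin (d * l) → ℝ :=
  fun k => x (finProdFinEquiv.symm k).1 * z (finProdFinEquiv.symm k).2

/-- Catalytic majorization: some finite-dimensional probability vector `z`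
satisfies `x ⊗ z ≺ y ⊗ z`. -/
def CatMaj {d : ℕ} (x y : Fin d → ℝ) : Prop :=
  ∃ (l : ℕ) (z : Fin l → ℝ), IsProbVec z ∧ IsMajorized (tens x z) (tens y z)

open Filter

lemma aux_ratio (a b : ℝ) :
    Tendsto (fun n : ℕ => ((n : ℝ) + a) / ((n : ℝ) + b)) atTop (nhds 1) := by
  have h2 := tendsto_natCast_div_add_atTop (𝕜 := ℝ) b
  have h3 : Tendsto (fun n : ℕ => 1 + a * (1 / (n : ℝ))) atTop (nhds 1) := by
    have h := (tendsto_const_nhds (x := a)).mul (tendsto_one_div_atTop_nhds_zero_nat)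
    simpa using (tendsto_const_nhds (x := (1:ℝ))).add h
  have h := h2.mul h3
  rw [one_mul] at h
  refine h.congr' ?_
  filter_upwards [eventually_ge_atTop 1] with n hn
  have hn0 : (n : ℝ) ≠ 0 := by positivity
  rcases eq_or_ne ((n : ℝ) + b) 0 with hb | hb
  · simp [hb]
  · field_simp

lemma desc_ratio : ∀ (k n : ℕ), k ≤ n →
    ((n + 1)! : ℝ) / (((n + 1 - k)! : ℝ) * (n : ℝ) ^ k)
      = ∏ i ∈ range k, ((n : ℝ) + 1 - i) / (n : ℝ) := by
  intro k
  induction k with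
  | zero => intro n _; simp [Nat.factorial_ne_zero]
  | succ k ih =>
    intro n hk
    rw [prod_range_succ, ← ih n (by omega)]
    have e2 : n + 1 - (k + 1) = n - k := by omega
    have e1 : (n + 1 - k)! = (n + 1 - k) * (n - k)! := by
      rw [show n + 1 - k = (n - k) + 1 by omega, Nat.factorial_succ]
    rw [e2, e1]
    have h1 : ((n - k)! : ℝ) ≠ 0 := Nat.cast_ne_zero.mpr (Nat.factorial_ne_zero _)
    have hn0 : (n : ℝ) ≠ 0 := Nat.cast_ne_zero.mpr (by omega)
    have hc : ((n + 1 - k : ℕ) : ℝ) = (n : ℝ) + 1 - k := by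
      push_cast [Nat.cast_sub (by omega : k ≤ n + 1)]; ring
    have hc0 : ((n + 1 - k : ℕ) : ℝ) ≠ 0 := Nat.cast_ne_zero.mpr (by omega)
    push_cast [hc] at *
    field_simp
    ring

lemma fact_ratio (x : ℝ) (m : ℕ) : ∀ j : ℕ,
    (m ! : ℝ) * x ^ j / ((m + j)! : ℝ) = ∏ i ∈ range j, x / ((m : ℝ) + 1 + i) := by
  intro j
  induction j with
  | zero => simp [Nat.factorial_ne_zero]
  | succ j ih =>
    rw [prod_range_succ, ← ih, ← Nat.add_assoc, Nat.factorial_succ]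
    have h1 : ((m + j)! : ℝ) ≠ 0 := Nat.cast_ne_zero.mpr (Nat.factorial_ne_zero _)
    have h2 : ((m + j + 1 : ℕ) : ℝ) ≠ 0 := Nat.cast_ne_zero.mpr (by omega)
    push_cast
    push_cast at h2
    field_simp
    ring

lemma coeff_eq (n k j : ℕ) (hk : k ≤ n) (hn : 1 ≤ n) :
    ((n + 1)! : ℝ) * (n : ℝ) ^ ((j : ℤ) - (k : ℤ)) / ((n + 1 + j - k)! : ℝ)
      = (∏ i ∈ range k, ((n : ℝ) + 1 - i) / (n : ℝ)) *
        ∏ i ∈ range j, (n : ℝ) / (((n + 1 - k : ℕ) : ℝ) + 1 + i) := by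
  rw [← desc_ratio k n hk, ← fact_ratio (n : ℝ) (n + 1 - k) j]
  have e : n + 1 + j - k = (n + 1 - k) + j := by omega
  rw [e]
  have hn0 : (n : ℝ) ≠ 0 := Nat.cast_ne_zero.mpr (by omega)
  have hz : (n : ℝ) ^ ((j : ℤ) - (k : ℤ)) = (n : ℝ) ^ j / (n : ℝ) ^ k := by
    rw [zpow_sub₀ hn0, zpow_natCast, zpow_natCast]
  have h1 : (((n + 1 - k)! : ℕ) : ℝ) ≠ 0 := Nat.cast_ne_zero.mpr (Nat.factorial_ne_zero _)
  have h2 : ((((n + 1 - k) + j)! : ℕ) : ℝ) ≠ 0 := Nat.cast_ne_zero.mpr (Nat.factorial_ne_zero _)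
  rw [hz]
  field_simp

lemma prod_desc_le_two (n m : ℕ) (hm : m ≤ n) (hn : 1 ≤ n) :
    ∏ i ∈ range m, ((n : ℝ) + 1 - i) / (n : ℝ) ≤ 2 := by
  have key : ∏ i ∈ range m, ((n : ℝ) + 1 - i) / (n : ℝ)
      ≤ ∏ i ∈ range m, (if i = 0 then (2 : ℝ) else 1) := by
    apply Finset.prod_le_prod
    · intro i hi
      simp only [mem_range] at hi
      have : (i : ℝ) ≤ (n : ℝ) := by exact_mod_cast le_of_lt (lt_of_lt_of_le hi hm)
      apply div_nonneg _ (by positivity)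
      linarith
    · intro i hi
      simp only [mem_range] at hi
      split_ifs with h
      · subst h
        rw [div_le_iff₀ (by positivity)]
        have : (1:ℝ) ≤ n := by exact_mod_cast hn
        push_cast; linarith
      · rw [div_le_one (by positivity)]
        have hi1 : (1 : ℝ) ≤ i := by exact_mod_cast Nat.one_le_iff_ne_zero.mpr h
        linarith
  calc _ ≤ _ := key
    _ ≤ 2 := by
        rw [Finset.prod_ite_eq' (range m) 0 (fun _ => (2:ℝ))]
        split_ifs <;> norm_num

lemma coeff_nonneg (n k j : ℕ) :
    0 ≤ ((n + 1)! : ℝ) * (n : ℝ) ^ ((j : ℤ) - (k : ℤ)) / ((n + 1 + j - k)! : ℝ) := by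
  apply div_nonneg (mul_nonneg (by positivity) (zpow_nonneg (by positivity) _)) (by positivity)

lemma coeff_le_two (n k j : ℕ) (hk : k ≤ n) (hn : 1 ≤ n) :
    ((n + 1)! : ℝ) * (n : ℝ) ^ ((j : ℤ) - (k : ℤ)) / ((n + 1 + j - k)! : ℝ) ≤ 2 := by
  rcases le_or_gt k j with hkj | hkj
  · have e1 : (j : ℤ) - (k : ℤ) = ((j - k : ℕ) : ℤ) := by omega
    have e2 : n + 1 + j - k = (n + 1) + (j - k) := by omega
    rw [e1, e2, zpow_natCast, fact_ratio (n : ℝ) (n + 1) (j - k)]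
    have h1 : ∏ i ∈ range (j - k), (n : ℝ) / (((n + 1 : ℕ) : ℝ) + 1 + i) ≤ 1 := by
      apply Finset.prod_le_one
      · intro i _; positivity
      · intro i _
        apply div_le_one_of_le₀ _ (by positivity)
        push_cast; linarith [Nat.cast_nonneg (α := ℝ) i]
    linarith
  · have e1 : (j : ℤ) - (k : ℤ) = -((k - j : ℕ) : ℤ) := by omega
    have e2 : n + 1 + j - k = n + 1 - (k - j) := by omega
    rw [e1, e2, zpow_neg, zpow_natCast]
    have heq : ((n + 1)! : ℝ) * ((n : ℝ) ^ (k - j))⁻¹ / ((n + 1 - (k - j))! : ℝ)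
        = ((n + 1)! : ℝ) / (((n + 1 - (k - j))! : ℝ) * (n : ℝ) ^ (k - j)) := by
      rw [div_mul_eq_div_div_swap, div_div]
      ring
    rw [heq, desc_ratio (k - j) n (by omega)]
    exact prod_desc_le_two n (k - j) (by omega) hn

lemma coeff_tendsto (k j : ℕ) :
    Tendsto (fun n : ℕ => ((n + 1)! : ℝ) * (n : ℝ) ^ ((j : ℤ) - (k : ℤ)) / ((n + 1 + j - k)! : ℝ))
      atTop (nhds 1) := by
  have hA : Tendsto (fun n : ℕ => ∏ i ∈ range k, ((n : ℝ) + (1 - (i : ℝ))) / ((n : ℝ) + 0))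
      atTop (nhds 1) := by
    have := tendsto_finset_prod (range k)
      (fun i (_ : i ∈ range k) => aux_ratio (1 - (i : ℝ)) 0)
    simpa using this
  have hB : Tendsto (fun n : ℕ => ∏ i ∈ range j, ((n : ℝ) + 0) / ((n : ℝ) + (2 + (i : ℝ) - k)))
      atTop (nhds 1) := by
    have := tendsto_finset_prod (range j)
      (fun i (_ : i ∈ range j) => aux_ratio 0 (2 + (i : ℝ) - k))
    simpa using this
  have h := hA.mul hB
  rw [one_mul] at h
  refine h.congr' ?_
  filter_upwards [eventually_ge_atTop (max k 1)] with n hn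
  have hk : k ≤ n := le_trans (le_max_left _ _) hn
  have hn1 : 1 ≤ n := le_trans (le_max_right _ _) hn
  rw [coeff_eq n k j hk hn1]
  congr 1
  · apply Finset.prod_congr rfl
    intro i _; rw [add_zero]; ring_nf
  · apply Finset.prod_congr rfl
    intro i _
    have hc : ((n + 1 - k : ℕ) : ℝ) = (n : ℝ) + 1 - k := by
      push_cast [Nat.cast_sub (by omega : k ≤ n + 1)]; ring
    rw [hc, add_zero]; ring_nf

/-- the series `∑_{j ≥ max(0, k-n-1)} ((n+1)! n^{j-k}/(n+1+j-k)!) r^{-j}`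
converges to `r/(r-1)` as `n → ∞`, for fixed `r > 1` and `k`. -/
theorem stmt18 (r : ℝ) (hr : 1 < r) (k : ℕ) :
    Filter.Tendsto
      (fun n : ℕ => ∑' j : ℕ,
        if k - (n + 1) ≤ j then
          ((n + 1)! : ℝ) * (n : ℝ) ^ ((j : ℤ) - (k : ℤ)) /
            ((n + 1 + j - k)! : ℝ) * r ^ (-(j : ℤ))
        else 0)
      Filter.atTop (nhds (r / (r - 1))) := by
  have hr0 : (0 : ℝ) < r := lt_trans one_pos hr
  have hrinv : r⁻¹ < 1 := inv_lt_one_of_one_lt₀ hr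
  have hpow : ∀ j : ℕ, r ^ (-(j : ℤ)) = r⁻¹ ^ j := by
    intro j; rw [zpow_neg, zpow_natCast, inv_pow]
  have hgeo : ∑' j : ℕ, r ^ (-(j : ℤ)) = r / (r - 1) := by
    simp_rw [hpow]
    rw [tsum_geometric_of_lt_one (by positivity) hrinv]
    rw [inv_eq_one_div]
    rw [div_eq_div_iff (by linarith) (by linarith)]
    field_simp
  have h_sum : Summable (fun j : ℕ => 2 * r⁻¹ ^ j) :=
    (summable_geometric_of_lt_one (by positivity) hrinv).mul_left 2
  have hab : ∀ j : ℕ, Tendsto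
      (fun n : ℕ => ((n + 1)! : ℝ) * (n : ℝ) ^ ((j : ℤ) - (k : ℤ)) /
        ((n + 1 + j - k)! : ℝ) * r ^ (-(j : ℤ))) atTop (nhds (r ^ (-(j : ℤ)))) := by
    intro j
    simpa using (coeff_tendsto k j).mul_const (r ^ (-(j : ℤ)))
  have h_bound : ∀ᶠ n in atTop, ∀ j : ℕ,
      ‖((n + 1)! : ℝ) * (n : ℝ) ^ ((j : ℤ) - (k : ℤ)) /
        ((n + 1 + j - k)! : ℝ) * r ^ (-(j : ℤ))‖ ≤ 2 * r⁻¹ ^ j := by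
    filter_upwards [eventually_ge_atTop (max k 1)] with n hn j
    have hk : k ≤ n := le_trans (le_max_left _ _) hn
    have hn1 : 1 ≤ n := le_trans (le_max_right _ _) hn
    rw [Real.norm_eq_abs, abs_of_nonneg (mul_nonneg (coeff_nonneg n k j)
      (zpow_nonneg hr0.le _)), hpow]
    exact mul_le_mul_of_nonneg_right (coeff_le_two n k j hk hn1) (by positivity)
  have hmain := tendsto_tsum_of_dominated_convergence h_sum hab h_bound
  rw [hgeo] at hmain
  refine hmain.congr' ?_
  filter_upwards [eventually_ge_atTop k] with n hn
  apply tsum_congr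
  intro j
  rw [if_pos (by omega)]
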